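/- Suppose k₁, k₂ ∈ ℂ \ {0} satisfy 0 ≤ Arg(k₁), Arg(k₂) < π. Define c₁ = e^{i·Arg(k₂)} if Re(k₁) ≥ 0 and c₁ = e^{i(Arg(k₂)−π)} if Re(k₁) < 0, and set α = 1/c₁. Then 0 ≤ Arg(k₂·α) ≤ π and 0 ≤ Arg(k₁² · conj(k₂) · conj(α)) ≤ π, where Arg here is taken in [0, 2π) with the convention Arg(z) ∈ [0,π] meaning Im(z) ≥ 0. -/

import Mathlib

open Real Complex

theorem stmt2 (k₁ k₂ : ℂ) (hk₁ : k₁ ≠ 0) (hk₂ : k₂ ≠ 0)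
    (ha₁ : 0 ≤ k₁.arg ∧ k₁.arg < π) (ha₂ : 0 ≤ k₂.arg ∧ k₂.arg < π)
    (c₁ α : ℂ)
    (hc₁ : c₁ = if 0 ≤ k₁.re then Complex.exp (Complex.I * (k₂.arg : ℂ))
      else Complex.exp (Complex.I * ((k₂.arg : ℂ) - (π : ℂ))))
    (hα : α = 1 / c₁) :
    0 ≤ (k₂ * α).im ∧
      0 ≤ (k₁ ^ 2 * (starRingEnd ℂ) k₂ * (starRingEnd ℂ) α).im := by
  have him1 : 0 ≤ k₁.im := Complex.arg_nonneg_iff.mp ha₁.1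
  set θ : ℝ := k₂.arg with hθ
  set r : ℝ := ‖k₂‖ with hr
  have hk2eq : (r : ℂ) * Complex.exp ((θ : ℂ) * Complex.I) = k₂ :=
    Complex.norm_mul_exp_arg_mul_I k₂
  have hr0 : 0 ≤ r := norm_nonneg k₂
  by_cases hre : 0 ≤ k₁.re
  · have hc : c₁ = Complex.exp ((θ : ℂ) * Complex.I) := by
      rw [hc₁, if_pos hre, mul_comm]
    have hαe : α = Complex.exp (-((θ : ℂ) * Complex.I)) := by
      rw [hα, hc, Complex.exp_neg, one_div]
    have hk2α : k₂ * α = (r : ℂ) := by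
      conv_lhs => rw [hαe, ← hk2eq]
      rw [mul_assoc, ← Complex.exp_add, add_neg_cancel, Complex.exp_zero, mul_one]
    constructor
    · rw [hk2α]; simp
    · have hconj : (starRingEnd ℂ) k₂ * (starRingEnd ℂ) α = (r : ℂ) := by
        rw [← map_mul, hk2α, Complex.conj_ofReal]
      rw [mul_assoc, hconj]
      have heq : (k₁ ^ 2 * (r : ℂ)).im = (2 * k₁.re * k₁.im) * r := by
        simp only [pow_two, Complex.mul_im, Complex.mul_re, Complex.ofReal_re,
          Complex.ofReal_im]
        ring
      rw [heq]
      have h1 : (0:ℝ) ≤ 2 * k₁.re * k₁.im := by positivity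
      exact mul_nonneg h1 hr0
  · push_neg at hre
    have hc : c₁ = Complex.exp (((θ : ℂ) - (π : ℂ)) * Complex.I) := by
      rw [hc₁, if_neg (not_le.mpr hre), mul_comm]
    have hαe : α = Complex.exp (-(((θ : ℂ) - (π : ℂ)) * Complex.I)) := by
      rw [hα, hc, Complex.exp_neg, one_div]
    have hk2α : k₂ * α = -(r : ℂ) := by
      conv_lhs => rw [hαe, ← hk2eq]
      rw [mul_assoc, ← Complex.exp_add]
      have h : (θ : ℂ) * Complex.I + -(((θ : ℂ) - (π : ℂ)) * Complex.I)
          = (π : ℂ) * Complex.I := by ring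
      rw [h, Complex.exp_pi_mul_I]
      ring
    constructor
    · rw [hk2α]; simp
    · have hconj : (starRingEnd ℂ) k₂ * (starRingEnd ℂ) α = -(r : ℂ) := by
        rw [← map_mul, hk2α, map_neg, Complex.conj_ofReal]
      rw [mul_assoc, hconj]
      have heq : (k₁ ^ 2 * -(r : ℂ)).im = (2 * (-k₁.re) * k₁.im) * r := by
        simp only [pow_two, mul_neg, Complex.neg_im, Complex.mul_im, Complex.mul_re,
          Complex.ofReal_re, Complex.ofReal_im]
        ring
      rw [heq]
      have hn : (0:ℝ) ≤ -k₁.re := by linarith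
      have h1 : (0:ℝ) ≤ 2 * (-k₁.re) * k₁.im := by positivity
      exact mul_nonneg h1 hr0
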